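/- For any ξ ∈ ℝ², d ∈ (0,1/3), and points x, y, z̄ ∈ ℝ² with z̄ = (x+y)/2 and |x−y| = d, it holds that ∫_{2d < |z−z̄| < 1/d} ln_−|z−ξ| / |z−z̄|² dz ≤ C((ln_− d)² + ln_− d) for an absolute constant C. -/

import Mathlib

open MeasureTheory

noncomputable def lnm (r : ℝ) : ℝ := max (-Real.log r) 0

local notation "E2" => EuclideanSpace ℝ (Fin 2)

open Set Metric in
private lemma aux_integrable {F : ℝ → ℝ} (hFm : Measurable F)
    (hF : IntegrableOn (fun r => F r * r) (Ioi (0:ℝ))) :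
    Integrable (fun x : E2 => F ‖x‖) := by
  have hdim : Module.finrank ℝ E2 = 2 := finrank_euclideanSpace_fin
  have h1 : Integrable (fun r : Ioi (0:ℝ) => F r) (Measure.volumeIoiPow 1) := by
    rw [Measure.volumeIoiPow, integrable_withDensity_iff
      ((measurable_subtype_coe.pow_const 1).ennreal_ofReal)
      (Filter.Eventually.of_forall fun _ => ENNReal.ofReal_lt_top)]
    have heq : (fun r : Ioi (0:ℝ) => F r.1 * (ENNReal.ofReal (r.1 ^ 1)).toReal)
        = (fun s => F s * s) ∘ (Subtype.val : Ioi (0:ℝ) → ℝ) := by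
      funext r
      simp [ENNReal.toReal_ofReal (le_of_lt r.2)]
    rw [heq, ← (MeasurableEmbedding.subtype_coe measurableSet_Ioi).integrable_map_iff,
      map_comap_subtype_coe measurableSet_Ioi]
    exact hF
  have h2 : Integrable (fun p : sphere (0:E2) 1 × Ioi (0:ℝ) => F p.2)
      ((volume : Measure E2).toSphere.prod (Measure.volumeIoiPow 1)) := by
    refine (integrable_prod_iff ?_).2 ⟨?_, ?_⟩
    · exact ((hFm.comp measurable_subtype_coe).comp measurable_snd).aestronglyMeasurable
    · exact Filter.Eventually.of_forall fun x => h1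
    · exact (integrable_const (∫ (y : ↑(Ioi (0:ℝ))), ‖F ↑y‖ ∂Measure.volumeIoiPow 1)).congr
        (Filter.Eventually.of_forall fun x => rfl)
  have h3 : Integrable (fun x : ({(0:E2)}ᶜ : Set E2) => F ‖x.1‖)
      ((volume : Measure E2).comap Subtype.val) := by
    have := (Measure.measurePreserving_homeomorphUnitSphereProd
      (volume : Measure E2)).integrable_comp_emb (Homeomorph.measurableEmbedding _)
      (g := F ∘ Subtype.val ∘ Prod.snd)
    rw [hdim] at this
    exact (this.2 h2).congr (Filter.Eventually.of_forall fun x => by simp)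
  have h4 := ((MeasurableEmbedding.subtype_coe
      (measurableSet_singleton (0:E2)).compl).integrable_map_iff
      (g := fun x : E2 => F ‖x‖)).2 h3
  rwa [map_comap_subtype_coe (measurableSet_singleton (0:E2)).compl,
    restrict_compl_singleton] at h4

private lemma lnm_nonneg (r : ℝ) : 0 ≤ lnm r := le_max_right _ _

private lemma lnm_anti {d s : ℝ} (hd : 0 < d) (hds : d ≤ s) : lnm s ≤ lnm d :=
  max_le_max (neg_le_neg (Real.log_le_log hd hds)) le_rfl

private lemma lnm_eq {d : ℝ} (hd : 0 ≤ d) (hd1 : d ≤ 1) : lnm d = -Real.log d :=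
  max_eq_left (neg_nonneg.2 (Real.log_nonpos hd hd1))

set_option maxHeartbeats 2000000 in
open Set Metric in
theorem annulus_log_integral_bound :
    ∃ C > 0, ∀ (ξ x y : EuclideanSpace ℝ (Fin 2)) (d : ℝ),
      0 < d → d < 1 / 3 → ‖x - y‖ = d →
      ∫ z in {z : EuclideanSpace ℝ (Fin 2) |
          2 * d < ‖z - (2:ℝ)⁻¹ • (x + y)‖ ∧ ‖z - (2:ℝ)⁻¹ • (x + y)‖ < 1 / d},
        lnm ‖z - ξ‖ / ‖z - (2:ℝ)⁻¹ • (x + y)‖ ^ 2 ≤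
          C * ((lnm d) ^ 2 + lnm d) := by
  set V : ℝ := (volume (ball (0:E2) 1)).toReal with hV
  have hV0 : 0 ≤ V := ENNReal.toReal_nonneg
  refine ⟨4*V+1, by positivity, ?_⟩
  intro ξ x y d hd hd3 _
  set c : E2 := (2:ℝ)⁻¹ • (x + y) with hc
  have hd1 : d < 1 := lt_trans hd3 (by norm_num)
  have hlnmd : lnm d = -Real.log d := lnm_eq hd.le hd1.le
  have h1le : (1:ℝ) ≤ lnm d := by
    rw [hlnmd, le_neg]
    have h3 : Real.log d ≤ Real.log (1/3) := Real.log_le_log hd hd3.le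
    have h4 : Real.log (1/3) ≤ -1 := by
      rw [show (1:ℝ)/3 = 3⁻¹ by norm_num, Real.log_inv, neg_le_neg_iff,
        Real.le_log_iff_exp_le (by norm_num)]
      exact le_trans Real.exp_one_lt_d9.le (by norm_num)
    linarith
  have hlnm0 : 0 ≤ lnm d := lnm_nonneg d
  have h2dlt : 2 * d < 1 / d := by
    rw [lt_div_iff₀ hd]; nlinarith
  set A : Set E2 := {z : E2 | 2*d < ‖z - c‖ ∧ ‖z - c‖ < 1/d} with hA
  have hAmeas : MeasurableSet A := by
    have : A = (fun z : E2 => ‖z - c‖) ⁻¹' (Ioo (2*d) (1/d)) := rfl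
    rw [this]
    exact ((continuous_id.sub continuous_const).norm).measurable measurableSet_Ioo
  -- radial majorants
  set F1 : ℝ → ℝ := (Ioo (2*d) (1/d)).indicator (fun r => lnm d / r^2) with hF1
  set F2 : ℝ → ℝ := (Iio d).indicator
      (fun r => (lnm d + 2*Real.sqrt d / Real.sqrt r) / (4*d^2)) with hF2
  have hF1m : Measurable F1 :=
    Measurable.indicator (measurable_const.div ((measurable_id.pow_const 2)))
      measurableSet_Ioo
  have hF2m : Measurable F2 :=
    Measurable.indicator
      ((measurable_const.add
        (measurable_const.div Real.continuous_sqrt.measurable)).div measurable_const)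
      measurableSet_Iio
  have hF1nn : ∀ r, 0 ≤ F1 r := by
    intro r
    apply Set.indicator_nonneg
    intro s hs
    have : (0:ℝ) < s := lt_trans (by positivity) hs.1
    positivity
  have hF2nn : ∀ r, 0 ≤ F2 r := by
    intro r
    apply Set.indicator_nonneg
    intro s _
    have h1 : 0 ≤ 2*Real.sqrt d / Real.sqrt s := by positivity
    have h2 : (0:ℝ) < 4*d^2 := by positivity
    exact div_nonneg (by linarith) h2.le
  -- 1D integrability
  have hIF1 : IntegrableOn (fun r => F1 r * r) (Ioi (0:ℝ)) := by
    have heq : (fun r => F1 r * r)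
        = (Ioo (2*d) (1/d)).indicator (fun r => (lnm d / r^2) * r) := by
      funext r
      by_cases hr : r ∈ Ioo (2*d) (1/d)
      · rw [hF1, Set.indicator_of_mem hr, Set.indicator_of_mem hr]
      · rw [hF1, Set.indicator_of_notMem hr, Set.indicator_of_notMem hr, zero_mul]
    rw [heq]
    apply (integrable_indicator_iff measurableSet_Ioo).2
    apply IntegrableOn.mono_set (t := Icc (2*d) (1/d)) _ Set.Ioo_subset_Icc_self
    apply ContinuousOn.integrableOn_compact isCompact_Icc
    apply ContinuousOn.mul _ continuousOn_id
    apply ContinuousOn.div continuousOn_const (by fun_prop)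
    intro s hs
    have : (0:ℝ) < s := lt_of_lt_of_le (by positivity) hs.1
    positivity
  have hIF2 : IntegrableOn (fun r => F2 r * r) (Ioi (0:ℝ)) := by
    have heq : (fun r => F2 r * r)
        = (Iio d).indicator
            (fun r => ((lnm d + 2*Real.sqrt d / Real.sqrt r) / (4*d^2)) * r) := by
      funext r
      by_cases hr : r ∈ Iio d
      · rw [hF2, Set.indicator_of_mem hr, Set.indicator_of_mem hr]
      · rw [hF2, Set.indicator_of_notMem hr, Set.indicator_of_notMem hr, zero_mul]
    rw [heq]
    apply (integrable_indicator_iff measurableSet_Iio).2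
    rw [IntegrableOn, Measure.restrict_restrict measurableSet_Iio, Set.Iio_inter_Ioi]
    have hcont : IntegrableOn
        (fun r => (lnm d * r + 2*Real.sqrt d * Real.sqrt r) / (4*d^2)) (Ioo (0:ℝ) d) := by
      apply IntegrableOn.mono_set (t := Icc (0:ℝ) d) _ Set.Ioo_subset_Icc_self
      apply ContinuousOn.integrableOn_compact isCompact_Icc
      exact ((continuousOn_const.mul continuousOn_id).add
        (continuousOn_const.mul Real.continuous_sqrt.continuousOn)).div
        continuousOn_const (fun s _ => by positivity)
    apply hcont.congr_fun _ measurableSet_Ioo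
    intro r hr
    have hr0 : 0 < r := hr.1
    have key : r * (2*Real.sqrt d / Real.sqrt r) = 2*Real.sqrt d * Real.sqrt r := by
      rw [mul_div_assoc', mul_comm r, mul_div_assoc, Real.div_sqrt]
    calc (lnm d * r + 2*Real.sqrt d * Real.sqrt r) / (4*d^2)
        = (lnm d * r + r * (2*Real.sqrt d / Real.sqrt r)) / (4*d^2) := by rw [key]
      _ = ((lnm d + 2*Real.sqrt d / Real.sqrt r) / (4*d^2)) * r := by ring
  -- 2D integrability of majorants
  have hG1int : Integrable (fun z : E2 => F1 ‖z - c‖) :=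
    (aux_integrable hF1m hIF1).comp_sub_right c
  have hG2int : Integrable (fun z : E2 => F2 ‖z - ξ‖) :=
    (aux_integrable hF2m hIF2).comp_sub_right ξ
  -- pointwise bound
  have hpt : ∀ z : E2, A.indicator (fun z => lnm ‖z - ξ‖ / ‖z - c‖^2) z
      ≤ F1 ‖z - c‖ + F2 ‖z - ξ‖ := by
    intro z
    by_cases hz : z ∈ A
    · rw [Set.indicator_of_mem hz]
      obtain ⟨hz1, hz2⟩ := hz
      have hr0 : (0:ℝ) < ‖z - c‖ := lt_trans (by positivity) hz1
      have hF1z : F1 ‖z - c‖ = lnm d / ‖z - c‖^2 :=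
        Set.indicator_of_mem (Set.mem_Ioo.2 ⟨hz1, hz2⟩) _
      by_cases hs : d ≤ ‖z - ξ‖
      · have h1 : lnm ‖z - ξ‖ / ‖z - c‖^2 ≤ lnm d / ‖z - c‖^2 :=
          (div_le_div_iff_of_pos_right (by positivity)).2 (lnm_anti hd hs)
        have h2 : 0 ≤ F2 ‖z - ξ‖ := hF2nn _
        rw [hF1z]; linarith
      · push_neg at hs
        have hs0 : 0 ≤ ‖z - ξ‖ := norm_nonneg _
        have hF2z : F2 ‖z - ξ‖ = (lnm d + 2*Real.sqrt d / Real.sqrt ‖z - ξ‖) / (4*d^2) :=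
          Set.indicator_of_mem (Set.mem_Iio.2 hs) _
        have h1 : lnm ‖z - ξ‖ / ‖z - c‖^2 ≤ lnm ‖z - ξ‖ / (4*d^2) := by
          apply div_le_div_of_nonneg_left (lnm_nonneg _) (by positivity)
          nlinarith
        have h2 : lnm ‖z - ξ‖ ≤ lnm d + 2*Real.sqrt d / Real.sqrt ‖z - ξ‖ := by
          rcases eq_or_lt_of_le hs0 with h0 | h0
          · rw [← h0]
            have he : lnm 0 = 0 := by simp [lnm]
            have hp : 0 ≤ 2*Real.sqrt d / Real.sqrt (0:ℝ) := by positivity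
            rw [he]; linarith
          · have hlt1 : ‖z - ξ‖ < 1 := lt_trans hs hd1
            rw [lnm_eq hs0 hlt1.le, hlnmd]
            have hlog : -Real.log ‖z - ξ‖ = -Real.log d + Real.log (d / ‖z - ξ‖) := by
              rw [Real.log_div hd.ne' (ne_of_gt h0)]; ring
            rw [hlog]
            have hds : 0 < d / ‖z - ξ‖ := by positivity
            have hsqrtpos : 0 < Real.sqrt (d / ‖z - ξ‖) := Real.sqrt_pos.2 hds
            have hkey : Real.log (d / ‖z - ξ‖) ≤ 2 * Real.sqrt (d / ‖z - ξ‖) := by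
              have h5 := Real.log_le_sub_one_of_pos hsqrtpos
              have hls : Real.log (Real.sqrt (d / ‖z - ξ‖)) = Real.log (d / ‖z - ξ‖) / 2 :=
                Real.log_sqrt hds.le
              rw [hls] at h5
              linarith
            have hsq : Real.sqrt (d / ‖z - ξ‖) = Real.sqrt d / Real.sqrt ‖z - ξ‖ :=
              Real.sqrt_div hd.le _
            rw [hsq] at hkey
            have hmd : 2*(Real.sqrt d/Real.sqrt ‖z - ξ‖) = 2*Real.sqrt d/Real.sqrt ‖z - ξ‖ := by
              ring
            linarith
        have h3 : lnm ‖z - ξ‖ / (4*d^2)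
            ≤ (lnm d + 2*Real.sqrt d / Real.sqrt ‖z - ξ‖) / (4*d^2) :=
          (div_le_div_iff_of_pos_right (by positivity)).2 h2
        have h4 : 0 ≤ F1 ‖z - c‖ := hF1nn _
        rw [hF2z]; linarith
    · rw [Set.indicator_of_notMem hz]
      exact add_nonneg (hF1nn _) (hF2nn _)
  -- main inequality
  have key : ∫ z in A, lnm ‖z - ξ‖ / ‖z - c‖^2
      ≤ (∫ z : E2, F1 ‖z - c‖) + ∫ z : E2, F2 ‖z - ξ‖ := by
    rw [← integral_indicator hAmeas, ← integral_add hG1int hG2int]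
    apply integral_mono_of_nonneg
    · apply Filter.Eventually.of_forall
      intro z
      apply Set.indicator_nonneg
      intro w hw
      have h6 : (0:ℝ) < ‖w - c‖ := lt_trans (by positivity) hw.1
      have h7 : 0 ≤ lnm ‖w - ξ‖ := lnm_nonneg _
      positivity
    · exact hG1int.add hG2int
    · exact Filter.Eventually.of_forall hpt
  -- compute the two integrals
  have hdim : Module.finrank ℝ E2 = 2 := finrank_euclideanSpace_fin
  have hIoosub : Ioo (2*d) (1/d) ⊆ Ioi (0:ℝ) := fun s hs => lt_trans (by positivity) hs.1
  have e1 : (∫ z : E2, F1 ‖z - c‖) = 2 * (V * (lnm d * Real.log ((1/d)/(2*d)))) := by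
    have ht : (∫ z : E2, F1 ‖z - c‖) = ∫ z : E2, F1 ‖z‖ :=
      integral_sub_right_eq_self (fun z : E2 => F1 ‖z‖) c
    rw [ht, integral_fun_norm_addHaar (volume : Measure E2) F1, hdim]
    have hJ : (∫ y in Ioi (0:ℝ), y ^ (2-1) • F1 y)
        = lnm d * Real.log ((1/d)/(2*d)) := by
      have h1 : ∀ y ∈ Ioi (0:ℝ), y ^ (2-1) • F1 y
          = (Ioo (2*d) (1/d)).indicator (fun r => lnm d * r⁻¹) y := by
        intro y hy
        by_cases hmem : y ∈ Ioo (2*d) (1/d)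
        · rw [hF1, Set.indicator_of_mem hmem, Set.indicator_of_mem hmem]
          have hy0 : y ≠ 0 := ne_of_gt hy
          simp only [show (2-1 : ℕ) = 1 from rfl, pow_one, smul_eq_mul]
          field_simp
        · rw [hF1, Set.indicator_of_notMem hmem, Set.indicator_of_notMem hmem, smul_zero]
      rw [setIntegral_congr_fun measurableSet_Ioi h1,
        setIntegral_indicator measurableSet_Ioo,
        Set.inter_eq_self_of_subset_right hIoosub, integral_const_mul,
        ← integral_Ioc_eq_integral_Ioo, ← intervalIntegral.integral_of_le h2dlt.le,
        integral_inv_of_pos (by positivity) (by positivity)]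
    rw [hJ, nsmul_eq_mul, smul_eq_mul]
    norm_num
    exact Or.inl rfl
  have e2 : (∫ z : E2, F2 ‖z - ξ‖)
      = 2 * (V * ((lnm d * (d^2/2) + 2*Real.sqrt d * (d ^ ((3:ℝ)/2) / (3/2))) / (4*d^2))) := by
    have ht : (∫ z : E2, F2 ‖z - ξ‖) = ∫ z : E2, F2 ‖z‖ :=
      integral_sub_right_eq_self (fun z : E2 => F2 ‖z‖) ξ
    rw [ht, integral_fun_norm_addHaar (volume : Measure E2) F2, hdim]
    have hJ : (∫ y in Ioi (0:ℝ), y ^ (2-1) • F2 y)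
        = (lnm d * (d^2/2) + 2*Real.sqrt d * (d ^ ((3:ℝ)/2) / (3/2))) / (4*d^2) := by
      have h1 : ∀ y ∈ Ioi (0:ℝ), y ^ (2-1) • F2 y
          = (Ioo 0 d).indicator
              (fun r => (lnm d * r + 2*Real.sqrt d * Real.sqrt r) / (4*d^2)) y := by
        intro y hy
        by_cases hmem : y < d
        · have hmem1 : y ∈ Iio d := hmem
          have hmem2 : y ∈ Ioo (0:ℝ) d := ⟨hy, hmem⟩
          rw [hF2, Set.indicator_of_mem hmem1, Set.indicator_of_mem hmem2]
          simp only [show (2-1 : ℕ) = 1 from rfl, pow_one, smul_eq_mul]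
          have hkey : y * (2*Real.sqrt d / Real.sqrt y) = 2*Real.sqrt d * Real.sqrt y := by
            rw [mul_div_assoc', mul_comm y, mul_div_assoc, Real.div_sqrt]
          calc y * ((lnm d + 2*Real.sqrt d / Real.sqrt y) / (4*d^2))
              = (lnm d * y + y * (2*Real.sqrt d / Real.sqrt y)) / (4*d^2) := by ring
            _ = (lnm d * y + 2*Real.sqrt d * Real.sqrt y) / (4*d^2) := by rw [hkey]
        · have hmem1 : y ∉ Iio d := hmem
          have hmem2 : y ∉ Ioo (0:ℝ) d := fun h => hmem h.2
          rw [hF2, Set.indicator_of_notMem hmem1, Set.indicator_of_notMem hmem2, smul_zero]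
      rw [setIntegral_congr_fun measurableSet_Ioi h1,
        setIntegral_indicator measurableSet_Ioo,
        Set.inter_eq_self_of_subset_right Set.Ioo_subset_Ioi_self,
        ← integral_Ioc_eq_integral_Ioo, ← intervalIntegral.integral_of_le hd.le]
      have hint1 : IntervalIntegrable (fun y : ℝ => lnm d * y) volume 0 d :=
        (continuous_const.mul continuous_id).intervalIntegrable 0 d
      have hint2 : IntervalIntegrable (fun y : ℝ => 2*Real.sqrt d * Real.sqrt y) volume 0 d :=
        (continuous_const.mul Real.continuous_sqrt).intervalIntegrable 0 d
      rw [intervalIntegral.integral_div, intervalIntegral.integral_add hint1 hint2,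
        intervalIntegral.integral_const_mul, intervalIntegral.integral_const_mul,
        integral_id]
      have hsqrt : (∫ y in (0:ℝ)..d, Real.sqrt y) = d ^ ((3:ℝ)/2) / (3/2) := by
        have hcg : (∫ y in (0:ℝ)..d, Real.sqrt y)
            = ∫ y in (0:ℝ)..d, y ^ ((1:ℝ)/2) := by
          apply intervalIntegral.integral_congr
          intro s hs
          rw [Set.uIcc_of_le hd.le] at hs
          exact Real.sqrt_eq_rpow s
        rw [hcg, integral_rpow (Or.inl (by norm_num))]
        rw [Real.zero_rpow (by norm_num)]
        norm_num
      rw [hsqrt]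
      norm_num
    rw [hJ, nsmul_eq_mul, smul_eq_mul]
    norm_num
    exact Or.inl rfl
  -- final arithmetic
  have hL : Real.log ((1/d)/(2*d)) ≤ 2 * lnm d := by
    rw [Real.log_div (by positivity) (by positivity), one_div, Real.log_inv,
      Real.log_mul two_ne_zero hd.ne', hlnmd]
    have hl2 : 0 ≤ Real.log 2 := Real.log_nonneg one_le_two
    linarith
  have hT2 : (lnm d * (d^2/2) + 2*Real.sqrt d * (d ^ ((3:ℝ)/2) / (3/2))) / (4*d^2)
      = lnm d / 8 + 1/3 := by
    have h32 : d ^ ((3:ℝ)/2) = d * Real.sqrt d := by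
      rw [show ((3:ℝ)/2) = 1 + 1/2 by norm_num, Real.rpow_add hd, Real.rpow_one,
        ← Real.sqrt_eq_rpow]
    have hss : Real.sqrt d * Real.sqrt d = d := Real.mul_self_sqrt hd.le
    rw [h32]
    have hnum : 2*Real.sqrt d * (d * Real.sqrt d / (3/2))
        = (4/3) * ((Real.sqrt d * Real.sqrt d) * d) := by ring
    rw [hnum, hss]
    field_simp
    ring
  have hstep : lnm d * Real.log ((1/d)/(2*d)) ≤ 2 * (lnm d)^2 := by
    nlinarith [mul_le_mul_of_nonneg_left hL hlnm0]
  calc ∫ z in A, lnm ‖z - ξ‖ / ‖z - c‖^2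
      ≤ (∫ z : E2, F1 ‖z - c‖) + ∫ z : E2, F2 ‖z - ξ‖ := key
    _ = 2 * (V * (lnm d * Real.log ((1/d)/(2*d)))) + 2 * (V * (lnm d / 8 + 1/3)) := by
        rw [e1, e2, hT2]
    _ ≤ 2 * (V * (2 * (lnm d)^2)) + 2 * (V * (lnm d / 8 + 1/3)) := by
        have := mul_le_mul_of_nonneg_left hstep hV0
        linarith
    _ ≤ (4*V+1) * ((lnm d)^2 + lnm d) := by
        nlinarith [h1le, hV0, sq_nonneg (lnm d), mul_nonneg hV0 (sub_nonneg.2 h1le)]
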